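/- arXiv:1112.0514 — 2 statements merged into one kernel-verified Lean document; each statement's English description precedes it below -/
import Mathlib

section
/- Let X₁, X₂, … be i.i.d. copies of a nonnegative random variable X with finite second moment, and fix t ≥ 0 with μ₀(t) = P(X > t) > 0, E(X − t | X > t) > 0 and Var(X − t | X > t) > 0. Then the empirical coefficient of variation of the conditional excedance, cvₙ(t), converges in probability to CV(t) as n → ∞. -/
open MeasureTheory ProbabilityTheory Real Filter Topology

/-- For i.i.d. copies of a nonnegative random variable `X` with finite second
moment and a threshold `t ≥ 0` with `P(X > t) > 0`, `E(X − t ∣ X > t) > 0` and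
`Var(X − t ∣ X > t) > 0`, the empirical coefficient of variation of the conditional excedance,
`cvₙ(t)`, converges in probability to `CV(t)` as `n → ∞`. -/
theorem stmt_1 {Ω : Type*} [MeasureSpace Ω] [IsProbabilityMeasure (ℙ : Measure Ω)]
    (X : ℕ → Ω → ℝ) (hXmeas : ∀ i, Measurable (X i))
    (hindep : iIndepFun X ℙ)
    (hident : ∀ i, IdentDistrib (X i) (X 0) ℙ ℙ)
    (hXnonneg : ∀ i ω, 0 ≤ X i ω)
    (hX2 : MemLp (X 0) 2 ℙ)
    (t : ℝ) (ht : 0 ≤ t)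
    (hpos : 0 < ℙ {ω | t < X 0 ω})
    (hmean : 0 < ∫ ω, (X 0 ω - t) ∂(ℙ[|{ω | t < X 0 ω}]))
    (hvar : 0 < variance (fun ω => X 0 ω - t) (ℙ[|{ω | t < X 0 ω}])) :
    TendstoInMeasure ℙ
      (fun n ω =>
        ((∑ j ∈ Finset.range n, if t < X j ω then (1 : ℝ) else 0) /
            ∑ j ∈ Finset.range n, (if t < X j ω then X j ω - t else 0)) *
          Real.sqrt
            ((∑ j ∈ Finset.range n, (if t < X j ω then (X j ω) ^ 2 else 0)) /
                (∑ j ∈ Finset.range n, if t < X j ω then (1 : ℝ) else 0) -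
              ((∑ j ∈ Finset.range n, (if t < X j ω then X j ω else 0)) /
                  (∑ j ∈ Finset.range n, if t < X j ω then (1 : ℝ) else 0)) ^ 2))
      atTop
      (fun _ =>
        Real.sqrt (variance (fun ω => X 0 ω - t) (ℙ[|{ω | t < X 0 ω}])) /
          ∫ ω, (X 0 ω - t) ∂(ℙ[|{ω | t < X 0 ω}])) := by
  classical
  have hs : MeasurableSet {ω | t < X 0 ω} := measurableSet_lt measurable_const (hXmeas 0)
  set s : Set Ω := {ω | t < X 0 ω} with hs_def
  set p : ℝ := (ℙ s).toReal with hp_def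
  have hp : 0 < p := ENNReal.toReal_pos hpos.ne' (measure_ne_top _ _)
  -- measurable pieces
  have hmg0 : Measurable fun x : ℝ => if t < x then (1:ℝ) else 0 :=
    Measurable.ite measurableSet_Ioi measurable_const measurable_const
  have hmg1 : Measurable fun x : ℝ => if t < x then x else 0 :=
    Measurable.ite measurableSet_Ioi measurable_id measurable_const
  have hmg2 : Measurable fun x : ℝ => if t < x then x ^ 2 else 0 :=
    Measurable.ite measurableSet_Ioi (measurable_id.pow_const 2) measurable_const
  -- integrability
  have hX1 : Integrable (X 0) ℙ := hX2.integrable one_le_two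
  have ig0 : Integrable (fun ω => if t < X 0 ω then (1:ℝ) else 0) ℙ := by
    have h : (fun ω => if t < X 0 ω then (1:ℝ) else 0) = s.indicator (fun _ => 1) := by
      funext ω
      by_cases h : t < X 0 ω <;> simp [Set.indicator_apply, hs_def, Set.mem_setOf_eq, h]
    rw [h]; exact (integrable_const 1).indicator hs
  have ig1 : Integrable (fun ω => if t < X 0 ω then X 0 ω else 0) ℙ := by
    refine hX1.abs.mono' ((hmg1.comp (hXmeas 0)).aestronglyMeasurable) ?_
    filter_upwards with ω
    by_cases h : t < X 0 ω <;> simp [h, Real.norm_eq_abs, abs_nonneg, le_abs_self]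
  have ig2 : Integrable (fun ω => if t < X 0 ω then (X 0 ω) ^ 2 else 0) ℙ := by
    refine hX2.integrable_sq.mono' ((hmg2.comp (hXmeas 0)).aestronglyMeasurable) ?_
    filter_upwards with ω
    by_cases h : t < X 0 ω <;>
      simp [h, Real.norm_eq_abs, abs_of_nonneg (sq_nonneg (X 0 ω)), sq_nonneg]
  -- SLLN
  have slln : ∀ g : ℝ → ℝ, Measurable g → Integrable (fun ω => g (X 0 ω)) ℙ →
      ∀ᵐ ω ∂(ℙ : Measure Ω), Tendsto (fun n : ℕ => (∑ j ∈ Finset.range n, g (X j ω)) / n) atTop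
        (𝓝 (∫ ω, g (X 0 ω) ∂ℙ)) := by
    intro g hg hgint
    exact strong_law_ae_real (fun i ω => g (X i ω)) hgint
      (fun i j hij => (hindep.indepFun hij).comp hg hg)
      (fun i => (hident i).comp hg)
  set e1 : ℝ := ∫ ω, (if t < X 0 ω then X 0 ω else 0) ∂ℙ with he1_def
  set e2 : ℝ := ∫ ω, (if t < X 0 ω then (X 0 ω) ^ 2 else 0) ∂ℙ with he2_def
  have he0 : ∫ ω, (if t < X 0 ω then (1:ℝ) else 0) ∂ℙ = p := by
    have h : (fun ω => if t < X 0 ω then (1:ℝ) else 0) = s.indicator (fun _ => 1) := by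
      funext ω
      by_cases h : t < X 0 ω <;> simp [Set.indicator_apply, hs_def, Set.mem_setOf_eq, h]
    rw [h, integral_indicator hs]
    simp [hp_def]; rfl
  -- conditional integrals
  have condint : ∀ f : Ω → ℝ, ∫ ω, f ω ∂(ℙ[|s]) = p⁻¹ * ∫ ω, s.indicator f ω ∂ℙ := by
    intro f
    rw [ProbabilityTheory.cond, integral_smul_measure, ← integral_indicator hs]
    rw [ENNReal.toReal_inv, smul_eq_mul]
  have hindm : s.indicator (fun ω => X 0 ω - t) = fun ω =>
      (if t < X 0 ω then X 0 ω else 0) - t * (if t < X 0 ω then (1:ℝ) else 0) := by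
    funext ω
    by_cases h : t < X 0 ω <;> simp [Set.indicator_apply, hs_def, Set.mem_setOf_eq, h]
  have hM : ∫ ω, (X 0 ω - t) ∂(ℙ[|s]) = p⁻¹ * (e1 - t * p) := by
    rw [condint, hindm, integral_sub ig1 (ig0.const_mul t), integral_const_mul, he0, ← he1_def]
  -- variance identity
  have hprob : IsProbabilityMeasure (ℙ[|s]) := cond_isProbabilityMeasure hpos.ne'
  have hmem : MemLp (fun ω => X 0 ω - t) 2 (ℙ[|s]) := by
    have h1 : MemLp (fun ω => X 0 ω - t) 2 ℙ := hX2.sub (memLp_const t)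
    have h2 := (h1.restrict s).smul_measure (c := (ℙ s)⁻¹)
      (ENNReal.inv_ne_top.mpr hpos.ne')
    exact h2
  have hinds : s.indicator (fun ω => (X 0 ω - t) ^ 2) = fun ω =>
      (if t < X 0 ω then (X 0 ω) ^ 2 else 0) - 2 * t * (if t < X 0 ω then X 0 ω else 0)
        + t ^ 2 * (if t < X 0 ω then (1:ℝ) else 0) := by
    funext ω
    by_cases h : t < X 0 ω <;>
      simp [Set.indicator_apply, hs_def, Set.mem_setOf_eq, h] <;> ring
  have igA : Integrable (fun ω => (if t < X 0 ω then (X 0 ω) ^ 2 else 0)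
      - 2 * t * (if t < X 0 ω then X 0 ω else 0)) ℙ := ig2.sub (ig1.const_mul (2 * t))
  have hsq : ∫ ω, (X 0 ω - t) ^ 2 ∂(ℙ[|s]) = p⁻¹ * (e2 - 2 * t * e1 + t ^ 2 * p) := by
    rw [condint, hinds]
    rw [integral_add igA (ig0.const_mul (t ^ 2)),
      integral_sub ig2 (ig1.const_mul (2 * t)), integral_const_mul, integral_const_mul, he0,
      ← he1_def, ← he2_def]
  have hVar : variance (fun ω => X 0 ω - t) (ℙ[|s]) = e2 / p - (e1 / p) ^ 2 := by
    rw [variance_eq_sub hmem]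
    simp only [Pi.pow_apply]
    rw [hsq, hM]
    field_simp
    ring
  -- positivity of the limiting denominator
  have hden : 0 < e1 - t * p := by
    have h := hmean
    rw [hM] at h
    have h2 := mul_pos hp h
    rwa [← mul_assoc, mul_inv_cancel₀ hp.ne', one_mul] at h2
  -- limit value
  have hLeq : (Real.sqrt (variance (fun ω => X 0 ω - t) (ℙ[|s])) /
      ∫ ω, (X 0 ω - t) ∂(ℙ[|s]))
      = p / (e1 - t * p) * Real.sqrt (e2 / p - (e1 / p) ^ 2) := by
    rw [hVar, hM]
    rw [div_eq_mul_inv, mul_inv, inv_inv]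
    ring
  rw [hLeq]
  -- measurability of the empirical sequence
  have hfmeas : ∀ n : ℕ, AEStronglyMeasurable (fun ω =>
      ((∑ j ∈ Finset.range n, if t < X j ω then (1 : ℝ) else 0) /
          ∑ j ∈ Finset.range n, (if t < X j ω then X j ω - t else 0)) *
        Real.sqrt
          ((∑ j ∈ Finset.range n, (if t < X j ω then (X j ω) ^ 2 else 0)) /
              (∑ j ∈ Finset.range n, if t < X j ω then (1 : ℝ) else 0) -
            ((∑ j ∈ Finset.range n, (if t < X j ω then X j ω else 0)) /
                (∑ j ∈ Finset.range n, if t < X j ω then (1 : ℝ) else 0)) ^ 2)) ℙ := by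
    intro n
    have m0 : Measurable fun ω => ∑ j ∈ Finset.range n, if t < X j ω then (1:ℝ) else 0 :=
      Finset.measurable_sum _ fun j _ => hmg0.comp (hXmeas j)
    have m1 : Measurable fun ω => ∑ j ∈ Finset.range n, if t < X j ω then X j ω else 0 :=
      Finset.measurable_sum _ fun j _ => hmg1.comp (hXmeas j)
    have m2 : Measurable fun ω => ∑ j ∈ Finset.range n, if t < X j ω then (X j ω) ^ 2 else 0 :=
      Finset.measurable_sum _ fun j _ => hmg2.comp (hXmeas j)
    have me : Measurable fun ω => ∑ j ∈ Finset.range n, if t < X j ω then X j ω - t else 0 :=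
      Finset.measurable_sum _ fun j _ =>
        Measurable.ite (measurableSet_lt measurable_const (hXmeas j))
          ((hXmeas j).sub measurable_const) measurable_const
    exact ((m0.div me).mul
      (Real.continuous_sqrt.measurable.comp ((m2.div m0).sub ((m1.div m0).pow_const 2)))
      ).aestronglyMeasurable
  refine tendstoInMeasure_of_tendsto_ae hfmeas ?_
  filter_upwards [slln _ hmg0 ig0, slln _ hmg1 ig1, slln _ hmg2 ig2] with ω h0 h1 h2
  rw [he0] at h0
  rw [← he1_def] at h1
  rw [← he2_def] at h2
  -- excess sum decomposition
  have hSe : ∀ n : ℕ, (∑ j ∈ Finset.range n, (if t < X j ω then X j ω - t else 0))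
      = (∑ j ∈ Finset.range n, if t < X j ω then X j ω else 0)
        - t * (∑ j ∈ Finset.range n, if t < X j ω then (1:ℝ) else 0) := by
    intro n
    rw [Finset.mul_sum, ← Finset.sum_sub_distrib]
    exact Finset.sum_congr rfl fun j _ => by by_cases h : t < X j ω <;> simp [h] <;> ring
  have hePre : Tendsto (fun n : ℕ =>
      (∑ j ∈ Finset.range n, (if t < X j ω then X j ω - t else 0)) / n) atTop
      (𝓝 (e1 - t * p)) := by
    have := h1.sub (h0.const_mul t)
    apply this.congr
    intro n
    rw [hSe, sub_div, mul_div_assoc]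
  have hmain : Tendsto (fun n : ℕ =>
      (((∑ j ∈ Finset.range n, if t < X j ω then (1:ℝ) else 0) / n) /
          ((∑ j ∈ Finset.range n, (if t < X j ω then X j ω - t else 0)) / n)) *
        Real.sqrt
          (((∑ j ∈ Finset.range n, (if t < X j ω then (X j ω) ^ 2 else 0)) / n) /
              ((∑ j ∈ Finset.range n, if t < X j ω then (1:ℝ) else 0) / n) -
            (((∑ j ∈ Finset.range n, (if t < X j ω then X j ω else 0)) / n) /
                ((∑ j ∈ Finset.range n, if t < X j ω then (1:ℝ) else 0) / n)) ^ 2))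
      atTop (𝓝 (p / (e1 - t * p) * Real.sqrt (e2 / p - (e1 / p) ^ 2))) := by
    refine (h0.div hePre hden.ne').mul ?_
    exact (Real.continuous_sqrt.tendsto _).comp
      ((h2.div h0 hp.ne').sub ((h1.div h0 hp.ne').pow 2))
  refine hmain.congr' ?_
  have hdiv : ∀ (a b : ℝ) (n : ℕ), n ≠ 0 → (a / n) / (b / n) = a / b := by
    intro a b n hn
    have hn' : (n : ℝ) ≠ 0 := Nat.cast_ne_zero.mpr hn
    rcases eq_or_ne b 0 with hb | hb
    · simp [hb]
    · field_simp
  filter_upwards [eventually_ge_atTop 1] with n hn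
  have hn' : n ≠ 0 := by omega
  rw [hdiv _ _ n hn', hdiv _ _ n hn', hdiv _ _ n hn']
end

section
/- Let μ > 0 and 0 ≤ s ≤ t. For u ≥ 0 define the truncated exponential moments μ_k(u) = μ^k e^{−u/μ} p_k(u/μ), where p₀(v)=1, p₁(v)=1+v, p₂(v)=2+v(2+v), p₃(v)=6+v(6+v(3+v)), p₄(v)=24+v(24+v(12+v(4+v))). Define the vector a(u) = ( e^{u/μ}(u² + 4uμ + 2μ²)/(2μ²), −e^{u/μ}(u + 2μ)/μ², e^{u/μ}/(2μ²) ) and the 3×3 matrix M(s,t) with entries M(s,t)_{ij} = μ_{i+j}(t) − μ_i(s)μ_j(t) for i,j ∈ {0,1,2}. Then a(s)ᵀ M(s,t) a(t) = exp(s/μ). -/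
open Real Matrix

/-- The polynomials `p_k` appearing in the truncated moments of the exponential distribution
with mean `1`: `μ_k¹(v) = e^{−v} p_k(v)` for `k = 0, …, 4`. -/
noncomputable def pExp : ℕ → ℝ → ℝ
  | 0, _ => 1
  | 1, v => 1 + v
  | 2, v => 2 + v * (2 + v)
  | 3, v => 6 + v * (6 + v * (3 + v))
  | 4, v => 24 + v * (24 + v * (12 + v * (4 + v)))
  | _ + 5, _ => 0

set_option maxHeartbeats 2000000 in
/-- For `μ > 0` and `0 ≤ s ≤ t`, with the truncated exponential moments
`μ_k(u) = μ^k e^{−u/μ} p_k(u/μ)`, the gradient vector `a(u)` and the covariance matrix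
`M(s,t)_{ij} = μ_{i+j}(t) − μ_i(s) μ_j(t)` (for `i,j ∈ {0,1,2}`), one has
`a(s)ᵀ M(s,t) a(t) = exp(s/μ)`. -/
theorem stmt_8 (μ s t : ℝ) (hμ : 0 < μ) (hs : 0 ≤ s) (hst : s ≤ t)
    (m : ℕ → ℝ → ℝ)
    (hm : ∀ k u, m k u = μ ^ k * Real.exp (-u / μ) * pExp k (u / μ))
    (a : ℝ → Fin 3 → ℝ)
    (ha : ∀ u, a u =
      ![Real.exp (u / μ) * (u ^ 2 + 4 * u * μ + 2 * μ ^ 2) / (2 * μ ^ 2),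
        -(Real.exp (u / μ) * (u + 2 * μ)) / μ ^ 2,
        Real.exp (u / μ) / (2 * μ ^ 2)])
    (M : Matrix (Fin 3) (Fin 3) ℝ)
    (hM : ∀ i j : Fin 3, M i j = m (i.1 + j.1) t - m i.1 s * m j.1 t) :
    dotProduct (a s) (M.mulVec (a t)) = Real.exp (s / μ) := by
  have hes : Real.exp (-s / μ) = (Real.exp (s / μ))⁻¹ := by
    rw [neg_div, Real.exp_neg]
  have het : Real.exp (-t / μ) = (Real.exp (t / μ))⁻¹ := by
    rw [neg_div, Real.exp_neg]
  have hsd : s / μ = s * μ⁻¹ := div_eq_mul_inv _ _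
  have htd : t / μ = t * μ⁻¹ := div_eq_mul_inv _ _
  simp only [dotProduct, Matrix.mulVec, Fin.sum_univ_three, ha, hM, hm, hes, het,
    Matrix.cons_val_zero, Matrix.cons_val_one, Matrix.head_cons, Matrix.cons_val_two,
    Matrix.tail_cons, Fin.val_zero, Fin.val_one, Fin.val_two, pExp, hsd, htd]
  have h1 : Real.exp (s * μ⁻¹) ≠ 0 := Real.exp_ne_zero _
  have h2 : Real.exp (t * μ⁻¹) ≠ 0 := Real.exp_ne_zero _
  field_simp
  ring
end
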